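/- Let X and Y be Banach spaces and let T : X → Y be a Fredholm continuous linear map. Then there exists ε > 0 such that every continuous linear map S : X → Y with ‖S − T‖ < ε (operator norm) is Fredholm and has the same index as T, i.e., (dim ker S) − (dim Y/range(S)) = (dim ker T) − (dim Y/range(T)) as integers. -/

import Mathlib

set_option linter.unusedSectionVars false
set_option maxHeartbeats 4000000
set_option synthInstance.maxHeartbeats 400000


/-!
STATEMENT 4: Fredholm operators between Banach spaces are stable under small operator-norm
perturbations, and the index is locally constant.
-/

variable {X Y : Type*} [NormedAddCommGroup X] [NormedSpace ℝ X] [CompleteSpace X]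
  [NormedAddCommGroup Y] [NormedSpace ℝ Y] [CompleteSpace Y]

/-- A continuous linear map between Banach spaces is Fredholm if its kernel is
finite-dimensional, its range is closed, and its cokernel is finite-dimensional. -/
def IsFredholm (T : X →L[ℝ] Y) : Prop :=
  FiniteDimensional ℝ (LinearMap.ker (T : X →ₗ[ℝ] Y)) ∧ IsClosed (LinearMap.range (T : X →ₗ[ℝ] Y) : Set Y) ∧
    FiniteDimensional ℝ (Y ⧸ LinearMap.range (T : X →ₗ[ℝ] Y))

/-- The index of an operator: `dim ker T − dim coker T`, as an integer. -/
noncomputable def fredholmIndex (T : X →L[ℝ] Y) : ℤ :=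
  (Module.finrank ℝ (LinearMap.ker (T : X →ₗ[ℝ] Y)) : ℤ) - (Module.finrank ℝ (Y ⧸ LinearMap.range (T : X →ₗ[ℝ] Y)) : ℤ)

/-- Auxiliary "stabilized" operator `(x, f) ↦ S x + f`. -/
noncomputable def hatMap (S : X →L[ℝ] Y) (F : Submodule ℝ Y) : (X × F) →L[ℝ] Y :=
  S.comp (ContinuousLinearMap.fst ℝ X F) + F.subtypeL.comp (ContinuousLinearMap.snd ℝ X F)

lemma hatMap_apply (S : X →L[ℝ] Y) (F : Submodule ℝ Y) (w : X × F) :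
    hatMap S F w = S w.1 + w.2 := rfl

/-- A continuous linear map between Banach spaces whose range has finite codimension
has closed range. -/
theorem isClosed_range_of_finiteDimensional_quotient (S : X →L[ℝ] Y)
    [FiniteDimensional ℝ (Y ⧸ LinearMap.range (S : X →ₗ[ℝ] Y))] :
    IsClosed (LinearMap.range (S : X →ₗ[ℝ] Y) : Set Y) := by
  obtain ⟨F, hF⟩ := Submodule.exists_isCompl (LinearMap.range (S : X →ₗ[ℝ] Y))
  haveI : FiniteDimensional ℝ F :=
    LinearEquiv.finiteDimensional (Submodule.quotientEquivOfIsCompl _ _ hF)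
  haveI : CompleteSpace F := FiniteDimensional.complete ℝ F
  set A := hatMap S F with hA
  have hker : ∀ w : X × F, A w = 0 → w.2 = 0 := by
    intro w hw
    have h1 : (w.2 : Y) ∈ LinearMap.range (S : X →ₗ[ℝ] Y) ⊓ F := by
      constructor
      · exact ⟨-w.1, by rw [map_neg]; rw [hatMap_apply] at hw; rw [eq_comm, ← sub_eq_zero]; rw [sub_neg_eq_add, add_comm]; exact hw⟩
      · exact w.2.2
    rw [hF.inf_eq_bot] at h1
    exact Subtype.ext h1
  have hsurj : Function.Surjective A := by
    intro y
    have : y ∈ LinearMap.range (S : X →ₗ[ℝ] Y) ⊔ F := by rw [hF.sup_eq_top]; trivial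
    obtain ⟨s, hs, f, hf, rfl⟩ := Submodule.mem_sup.mp this
    obtain ⟨x, rfl⟩ := hs
    exact ⟨(x, ⟨f, hf⟩), rfl⟩
  have hopen : IsOpenMap A := A.isOpenMap hsurj
  have heq : ((LinearMap.range (S : X →ₗ[ℝ] Y) : Set Y))ᶜ = A '' {w | w.2 ≠ 0} := by
    ext y
    simp only [Set.mem_compl_iff, Set.mem_image, Set.mem_setOf_eq, SetLike.mem_coe]
    constructor
    · intro hy
      obtain ⟨w, rfl⟩ := hsurj y
      refine ⟨w, fun h2 => hy ⟨w.1, ?_⟩, rfl⟩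
      rw [hatMap_apply, h2]; simp
    · rintro ⟨w, hw2, rfl⟩ ⟨x, hx⟩
      apply hw2
      have : A (w - (x, 0)) = 0 := by
        rw [map_sub, ← hx, hatMap_apply]; simp
      have := hker _ this
      simpa using this
  rw [← isOpen_compl_iff, heq]
  exact hopen _ (isOpen_compl_iff.mpr (isClosed_eq (by fun_prop) continuous_const))
/-- If `A` restricted to a complement `Z` of `K` is bijective onto the target,
then `ker A` is isomorphic to `K`. -/
theorem ker_equiv_of_isCompl {W : Type*} [AddCommGroup W] [Module ℝ W]
    (A : W →ₗ[ℝ] Y) (Z K : Submodule ℝ W) (h : IsCompl Z K)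
    (hinj : ∀ z ∈ Z, A z = 0 → z = 0)
    (hsurj : ∀ y : Y, ∃ z ∈ Z, A z = y) :
    Nonempty ((LinearMap.ker A) ≃ₗ[ℝ] K) := by
  set π := K.projectionOnto Z h.symm with hπ
  set φ := π.comp (LinearMap.ker A).subtype with hφ
  have hbij : Function.Bijective φ := by
    constructor
    · intro a b hab
      have h1 : π (a - b : W) = 0 := by
        have : ((a : W) - b) = ((a:W) - b) := rfl
        rw [map_sub]
        rw [LinearMap.comp_apply] at hab
        simp only [hφ, LinearMap.comp_apply, Submodule.subtype_apply] at hab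
        rw [hab, sub_self]
      have hz : ((a : W) - b) ∈ Z := by
        rw [← Submodule.ker_projectionOnto (h := h.symm)] at *
        exact h1
      have : ((a : W) - b) = 0 := by
        apply hinj _ hz
        rw [map_sub]
        rw [a.2, b.2, sub_self]
      exact Subtype.ext (sub_eq_zero.mp this)
    · intro k
      obtain ⟨z, hz, hzk⟩ := hsurj (-(A k))
      have hmem : (z + (k : W)) ∈ LinearMap.ker A := by
        rw [LinearMap.mem_ker, map_add, hzk, neg_add_cancel]
      refine ⟨⟨z + k, hmem⟩, ?_⟩
      simp only [hφ, LinearMap.comp_apply, Submodule.subtype_apply]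
      rw [map_add]
      have h1 : π z = 0 := by
        rw [← LinearMap.mem_ker, Submodule.ker_projectionOnto]
        exact hz
      have h2 : π (k : W) = k := Submodule.projectionOnto_apply_left h.symm k
      rw [h1, h2, zero_add]
  exact ⟨LinearEquiv.ofBijective φ hbij⟩

theorem index_formula (S : X →L[ℝ] Y) (F : Submodule ℝ Y) [FiniteDimensional ℝ F]
    (hsup : LinearMap.range (S : X →ₗ[ℝ] Y) ⊔ F = ⊤)
    (hfin : FiniteDimensional ℝ (LinearMap.ker (hatMap S F : (X × F) →ₗ[ℝ] Y))) :
    FiniteDimensional ℝ (LinearMap.ker (S : X →ₗ[ℝ] Y)) ∧ FiniteDimensional ℝ (Y ⧸ LinearMap.range (S : X →ₗ[ℝ] Y)) ∧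
      Module.finrank ℝ (LinearMap.ker (S : X →ₗ[ℝ] Y)) + Module.finrank ℝ F =
        Module.finrank ℝ (LinearMap.ker (hatMap S F : (X × F) →ₗ[ℝ] Y)) +
          Module.finrank ℝ (Y ⧸ LinearMap.range (S : X →ₗ[ℝ] Y)) := by
  classical
  haveI := hfin
  -- the map from F onto the cokernel
  set ψ : F →ₗ[ℝ] (Y ⧸ LinearMap.range (S : X →ₗ[ℝ] Y)) := (LinearMap.range (S : X →ₗ[ℝ] Y)).mkQ.comp F.subtype with hψ
  have hψs : Function.Surjective ψ := by
    intro q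
    obtain ⟨y, rfl⟩ := (LinearMap.range (S : X →ₗ[ℝ] Y)).mkQ_surjective q
    have : y ∈ LinearMap.range (S : X →ₗ[ℝ] Y) ⊔ F := by rw [hsup]; trivial
    obtain ⟨s, hs, f, hf, rfl⟩ := Submodule.mem_sup.mp this
    refine ⟨⟨f, hf⟩, ?_⟩
    simp only [hψ, LinearMap.comp_apply, Submodule.subtype_apply]
    rw [Submodule.mkQ_apply, Submodule.mkQ_apply, Submodule.Quotient.eq]
    simpa using hs
  haveI hcfin : FiniteDimensional ℝ (Y ⧸ LinearMap.range (S : X →ₗ[ℝ] Y)) := Module.Finite.of_surjective ψ hψs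
  -- the map from ker (hatMap S F) to F
  set χ : LinearMap.ker (hatMap S F : (X × F) →ₗ[ℝ] Y) →ₗ[ℝ] F :=
    (LinearMap.snd ℝ X F).comp (LinearMap.ker (hatMap S F : (X × F) →ₗ[ℝ] Y)).subtype with hχ
  -- embed ker S into ker (hatMap S F)
  have hmem0 : ∀ x : LinearMap.ker (S : X →ₗ[ℝ] Y), ((x : X), (0 : F)) ∈ LinearMap.ker (hatMap S F : (X × F) →ₗ[ℝ] Y) := by
    intro x
    rw [LinearMap.mem_ker, ContinuousLinearMap.coe_coe, hatMap_apply]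
    simp [x.2]
  set ι : LinearMap.ker (S : X →ₗ[ℝ] Y) →ₗ[ℝ] LinearMap.ker (hatMap S F : (X × F) →ₗ[ℝ] Y) :=
    LinearMap.codRestrict _ ((LinearMap.inl ℝ X F).comp (LinearMap.ker (S : X →ₗ[ℝ] Y)).subtype)
      (fun x => hmem0 x) with hι
  have hιinj : Function.Injective ι := by
    intro a b hab
    apply Subtype.ext
    have h2 : ((ι a : X × F)).1 = ((ι b : X × F)).1 := by rw [hab]
    exact h2
  have hιrange : LinearMap.range ι = LinearMap.ker χ := by
    ext a
    simp only [LinearMap.mem_range, LinearMap.mem_ker]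
    constructor
    · rintro ⟨x, rfl⟩
      rfl
    · intro ha
      have ha' : ((a : X × F)).2 = 0 := ha
      have hx : (a : X × F).1 ∈ LinearMap.ker (S : X →ₗ[ℝ] Y) := by
        have h2 := a.2
        rw [LinearMap.mem_ker, ContinuousLinearMap.coe_coe, hatMap_apply, ha'] at h2
        simpa using h2
      refine ⟨⟨(a : X × F).1, hx⟩, ?_⟩
      apply Subtype.ext
      simp only [hι, LinearMap.codRestrict_apply, LinearMap.comp_apply,
        Submodule.subtype_apply, LinearMap.inl_apply]
      exact Prod.ext rfl ha'.symm
  have hrχ : LinearMap.range χ = (LinearMap.range (S : X →ₗ[ℝ] Y)).comap F.subtype := by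
    ext f
    simp only [LinearMap.mem_range, Submodule.mem_comap, Submodule.subtype_apply]
    constructor
    · rintro ⟨a, rfl⟩
      have ha := a.2
      rw [LinearMap.mem_ker, ContinuousLinearMap.coe_coe, hatMap_apply] at ha
      refine ⟨-(a : X × F).1, ?_⟩
      rw [map_neg]
      simp only [hχ, LinearMap.comp_apply, Submodule.subtype_apply, LinearMap.snd_apply]
      rw [eq_comm]
      exact_mod_cast eq_neg_of_add_eq_zero_right ha
    · rintro ⟨x, hx⟩
      have hmem : ((-x, f) : X × F) ∈ LinearMap.ker (hatMap S F : (X × F) →ₗ[ℝ] Y) := by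
        rw [LinearMap.mem_ker, ContinuousLinearMap.coe_coe, hatMap_apply]; simp [show S x = f from hx]
      exact ⟨⟨(-x, f), hmem⟩, rfl⟩
  have hkψ : LinearMap.ker ψ = (LinearMap.range (S : X →ₗ[ℝ] Y)).comap F.subtype := by
    ext f
    simp only [LinearMap.mem_ker, Submodule.mem_comap, Submodule.subtype_apply, hψ,
      LinearMap.comp_apply, Submodule.mkQ_apply]
    rw [Submodule.Quotient.mk_eq_zero]
  haveI hkSfin : FiniteDimensional ℝ (LinearMap.ker (S : X →ₗ[ℝ] Y)) :=
    FiniteDimensional.of_injective ι hιinj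
  refine ⟨hkSfin, hcfin, ?_⟩
  have e1 := LinearMap.finrank_range_add_finrank_ker χ
  have e2 := LinearMap.finrank_range_add_finrank_ker ψ
  have e3 : Module.finrank ℝ (LinearMap.range ψ) = Module.finrank ℝ (Y ⧸ LinearMap.range (S : X →ₗ[ℝ] Y)) := by
    rw [LinearMap.range_eq_top.mpr hψs]; exact finrank_top ℝ _
  have e4 : Module.finrank ℝ (LinearMap.range ι) = Module.finrank ℝ (LinearMap.ker (S : X →ₗ[ℝ] Y)) :=
    LinearMap.finrank_range_of_inj hιinj
  rw [hιrange] at e4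
  have e6 : Module.finrank ℝ (LinearMap.range χ) = Module.finrank ℝ (LinearMap.ker ψ) := by
    rw [hrχ, hkψ]
  omega

theorem isFredholm_stable_index_locally_constant'
    (T : X →L[ℝ] Y) (hkT : FiniteDimensional ℝ (LinearMap.ker (T : X →ₗ[ℝ] Y)))
    (hqT : FiniteDimensional ℝ (Y ⧸ LinearMap.range (T : X →ₗ[ℝ] Y))) :
    ∃ ε > (0 : ℝ), ∀ S : X →L[ℝ] Y, ‖S - T‖ < ε →
      (FiniteDimensional ℝ (LinearMap.ker (S : X →ₗ[ℝ] Y)) ∧ IsClosed (LinearMap.range (S : X →ₗ[ℝ] Y) : Set Y) ∧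
        FiniteDimensional ℝ (Y ⧸ LinearMap.range (S : X →ₗ[ℝ] Y))) ∧
      (Module.finrank ℝ (LinearMap.ker (S : X →ₗ[ℝ] Y)) : ℤ) - (Module.finrank ℝ (Y ⧸ LinearMap.range (S : X →ₗ[ℝ] Y)) : ℤ)
        = (Module.finrank ℝ (LinearMap.ker (T : X →ₗ[ℝ] Y)) : ℤ)
          - (Module.finrank ℝ (Y ⧸ LinearMap.range (T : X →ₗ[ℝ] Y)) : ℤ) := by
  classical
  haveI := hkT; haveI := hqT
  -- complement of the range
  obtain ⟨F, hF⟩ := Submodule.exists_isCompl (LinearMap.range (T : X →ₗ[ℝ] Y))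
  haveI : FiniteDimensional ℝ F :=
    LinearEquiv.finiteDimensional (Submodule.quotientEquivOfIsCompl _ _ hF)
  haveI : CompleteSpace F := FiniteDimensional.complete ℝ F
  -- closed complement of the kernel
  obtain ⟨X₀, hX₀closed, hX₀⟩ :=
    (Submodule.ClosedComplemented.of_finiteDimensional (LinearMap.ker (T : X →ₗ[ℝ] Y))).exists_isClosed_isCompl
  -- the subspaces Z and K of X × F
  set Z : Submodule ℝ (X × F) := X₀.prod ⊤ with hZdef
  set K : Submodule ℝ (X × F) := (LinearMap.ker (T : X →ₗ[ℝ] Y)).prod ⊥ with hKdef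
  have hZK : IsCompl Z K := by
    constructor
    · rw [disjoint_iff]
      ext w
      simp only [Submodule.mem_inf, Submodule.mem_bot]
      constructor
      · rintro ⟨hwZ, hwK⟩
        have h1 : w.1 ∈ X₀ := (Submodule.mem_prod.mp hwZ).1
        have h2 : w.1 ∈ LinearMap.ker (T : X →ₗ[ℝ] Y) := (Submodule.mem_prod.mp hwK).1
        have h3 : w.2 ∈ (⊥ : Submodule ℝ F) := (Submodule.mem_prod.mp hwK).2
        have hx : w.1 ∈ LinearMap.ker (T : X →ₗ[ℝ] Y) ⊓ X₀ := ⟨h2, h1⟩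
        rw [hX₀.inf_eq_bot, Submodule.mem_bot] at hx
        rw [Submodule.mem_bot] at h3
        exact Prod.ext hx h3
      · rintro rfl
        exact ⟨⟨Submodule.zero_mem _, Submodule.zero_mem _⟩,
          ⟨Submodule.zero_mem _, Submodule.zero_mem _⟩⟩
    · rw [codisjoint_iff, eq_top_iff]
      rintro ⟨x, f⟩ -
      have hx : x ∈ LinearMap.ker (T : X →ₗ[ℝ] Y) ⊔ X₀ := by rw [hX₀.sup_eq_top]; trivial
      obtain ⟨k, hk, x₀, hx₀, rfl⟩ := Submodule.mem_sup.mp hx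
      have h1 : ((x₀, f) : X × F) ∈ Z := ⟨hx₀, trivial⟩
      have h2 : ((k, 0) : X × F) ∈ K := ⟨hk, rfl⟩
      have : ((k + x₀, f) : X × F) = (x₀, f) + (k, 0) := by
        ext <;> simp [add_comm]
      rw [this]
      exact Submodule.add_mem_sup h1 h2
  haveI hKfin : FiniteDimensional ℝ K := by
    have hv : ∀ w : K, ((w : X × F)).1 ∈ LinearMap.ker (T : X →ₗ[ℝ] Y) := by
      intro w
      exact (Submodule.mem_prod.mp w.2).1
    set v : K →ₗ[ℝ] LinearMap.ker (T : X →ₗ[ℝ] Y) :=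
      LinearMap.codRestrict _ ((LinearMap.fst ℝ X F).comp K.subtype) hv with hvdef
    have hvinj : Function.Injective v := by
      intro a b hab
      apply Subtype.ext
      have h1 : ((a : X × F)).1 = ((b : X × F)).1 := congrArg Subtype.val hab
      have h2 : ((a : X × F)).2 = ((b : X × F)).2 := by
        have ha := Submodule.mem_bot ℝ |>.mp (Submodule.mem_prod.mp a.2).2
        have hb := Submodule.mem_bot ℝ |>.mp (Submodule.mem_prod.mp b.2).2
        rw [ha, hb]
      exact Prod.ext h1 h2
    exact FiniteDimensional.of_injective v hvinj
  -- Z is a Banach space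
  haveI : CompleteSpace Z := by
    have hcl : IsClosed (Z : Set (X × F)) := by
      have : (Z : Set (X × F)) = (X₀ : Set X) ×ˢ (Set.univ : Set F) := by
        ext w
        simp [hZdef, Submodule.mem_prod, Set.mem_prod]
      rw [this]
      exact hX₀closed.prod isClosed_univ
    exact hcl.completeSpace_coe
  -- the restriction of hat T to Z is a continuous linear equivalence
  set DZ := (hatMap T F).comp Z.subtypeL with hDZ
  have hDZinj : LinearMap.ker (DZ : Z →ₗ[ℝ] Y) = ⊥ := by
    rw [LinearMap.ker_eq_bot']
    intro w hw
    have hw' : T ((w : X × F)).1 + ((w : X × F)).2 = 0 := hw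
    have hTf : T ((w : X × F)).1 ∈ LinearMap.range (T : X →ₗ[ℝ] Y) ⊓ F := by
      refine ⟨LinearMap.mem_range_self _ _, ?_⟩
      have : T ((w : X × F)).1 = -(((w : X × F)).2 : Y) := eq_neg_of_add_eq_zero_left hw'
      rw [this]
      exact neg_mem ((w : X × F)).2.2
    rw [hF.inf_eq_bot, Submodule.mem_bot] at hTf
    have hf0 : ((w : X × F)).2 = 0 := by
      apply Subtype.ext
      have := hw'
      rw [hTf, zero_add] at this
      exact this
    have hx0 : ((w : X × F)).1 = 0 := by
      have hmem := (Submodule.mem_prod.mp w.2).1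
      have hk : ((w : X × F)).1 ∈ LinearMap.ker (T : X →ₗ[ℝ] Y) ⊓ X₀ :=
        ⟨LinearMap.mem_ker.mpr hTf, hmem⟩
      rwa [hX₀.inf_eq_bot, Submodule.mem_bot] at hk
    apply Subtype.ext
    exact Prod.ext hx0 hf0
  have hDZsurj : LinearMap.range (DZ : Z →ₗ[ℝ] Y) = ⊤ := by
    rw [LinearMap.range_eq_top]
    intro y
    have hy : y ∈ LinearMap.range (T : X →ₗ[ℝ] Y) ⊔ F := by rw [hF.sup_eq_top]; trivial
    obtain ⟨t, ht, f, hf, rfl⟩ := Submodule.mem_sup.mp hy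
    obtain ⟨x, rfl⟩ := ht
    have hx : x ∈ LinearMap.ker (T : X →ₗ[ℝ] Y) ⊔ X₀ := by rw [hX₀.sup_eq_top]; trivial
    obtain ⟨k, hk, x₀, hx₀, rfl⟩ := Submodule.mem_sup.mp hx
    refine ⟨⟨(x₀, ⟨f, hf⟩), ⟨hx₀, trivial⟩⟩, ?_⟩
    show T x₀ + f = T (k + x₀) + f
    rw [map_add, show T k = 0 from LinearMap.mem_ker.mp hk, zero_add]
  set eD := ContinuousLinearEquiv.ofBijective DZ hDZinj hDZsurj with heD
  have heDapp : ∀ z : Z, eD z = DZ z := fun z => rfl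
  set C := ‖(eD.symm : Y →L[ℝ] Z)‖ with hC
  have hCpos : 0 < 1 + C := by positivity
  refine ⟨(1 + C)⁻¹, by positivity, ?_⟩
  have key : ∀ S : X →L[ℝ] Y, ‖S - T‖ < (1 + C)⁻¹ →
      (FiniteDimensional ℝ (LinearMap.ker (S : X →ₗ[ℝ] Y)) ∧ IsClosed (LinearMap.range (S : X →ₗ[ℝ] Y) : Set Y) ∧
        FiniteDimensional ℝ (Y ⧸ LinearMap.range (S : X →ₗ[ℝ] Y))) ∧
      Module.finrank ℝ (LinearMap.ker (S : X →ₗ[ℝ] Y)) + Module.finrank ℝ F =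
        Module.finrank ℝ K + Module.finrank ℝ (Y ⧸ LinearMap.range (S : X →ₗ[ℝ] Y)) := by
    intro S hS
    set B := S - T with hB
    have hhat : ∀ w : X × F, hatMap S F w = hatMap T F w + B w.1 := by
      intro w
      rw [hatMap_apply, hatMap_apply, hB, ContinuousLinearMap.sub_apply]
      abel
    set EZ : Z →L[ℝ] Y := B.comp ((ContinuousLinearMap.fst ℝ X F).comp Z.subtypeL) with hEZ
    have hEZnorm : ‖EZ‖ ≤ ‖B‖ := by
      apply ContinuousLinearMap.opNorm_le_bound _ (norm_nonneg B)
      intro z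
      calc ‖EZ z‖ = ‖B ((z : X × F)).1‖ := rfl
        _ ≤ ‖B‖ * ‖((z : X × F)).1‖ := B.le_opNorm _
        _ ≤ ‖B‖ * ‖z‖ := by
            apply mul_le_mul_of_nonneg_left _ (norm_nonneg B)
            exact norm_fst_le ((z : X × F))
    set M : Z →L[ℝ] Z := (eD.symm : Y →L[ℝ] Z).comp EZ with hM
    have hMnorm : ‖M‖ < 1 := by
      calc ‖M‖ ≤ C * ‖EZ‖ := ContinuousLinearMap.opNorm_comp_le _ _
        _ ≤ C * ‖B‖ := mul_le_mul_of_nonneg_left hEZnorm (norm_nonneg _)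
        _ ≤ (1 + C) * ‖B‖ := by nlinarith [norm_nonneg B]
        _ < (1 + C) * (1 + C)⁻¹ := by
            apply mul_lt_mul_of_pos_left hS hCpos
        _ = 1 := mul_inv_cancel₀ (ne_of_gt hCpos)
    have hMnorm' : ‖-M‖ < 1 := by
      calc ‖-M‖ = ‖M‖ := norm_neg M
        _ < 1 := hMnorm
    set u : (Z →L[ℝ] Z)ˣ := Units.oneSub (-M) hMnorm' with hu
    have huval : (u : Z →L[ℝ] Z) = 1 + M := by
      rw [hu, Units.val_oneSub]
      abel
    have hubij : Function.Bijective (u : Z →L[ℝ] Z) := by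
      have := (Units.isUnit u)
      rcases this with ⟨v, hv⟩
      constructor
      · intro a b hab
        have h1 := congrArg (fun f : Z →L[ℝ] Z => f a) v.inv_mul
        have h2 := congrArg (fun f : Z →L[ℝ] Z => f b) v.inv_mul
        simp only [ContinuousLinearMap.mul_apply, ContinuousLinearMap.one_apply] at h1 h2
        rw [hv] at h1 h2
        rw [← h1, ← h2, hab]
      · intro z
        refine ⟨((v⁻¹ : (Z →L[ℝ] Z)ˣ) : Z →L[ℝ] Z) z, ?_⟩
        have h1 := congrArg (fun f : Z →L[ℝ] Z => f z) v.mul_inv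
        simp only [ContinuousLinearMap.mul_apply, ContinuousLinearMap.one_apply] at h1
        rw [hv] at h1
        exact h1
    have hcomp : ∀ z : Z, hatMap S F (z : X × F) = DZ ((u : Z →L[ℝ] Z) z) := by
      intro z
      rw [huval]
      have h1 : ((1 + M : Z →L[ℝ] Z) z) = z + M z := rfl
      rw [h1, map_add]
      have h2 : DZ (M z) = EZ z := by
        rw [hM, ContinuousLinearMap.comp_apply]
        exact eD.apply_symm_apply (EZ z)
      rw [h2, hhat]
      rfl
    have hSZbij : Function.Bijective (fun z : Z => hatMap S F (z : X × F)) := by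
      have hDb : Function.Bijective DZ :=
        ⟨LinearMap.ker_eq_bot.mp hDZinj, LinearMap.range_eq_top.mp hDZsurj⟩
      have : (fun z : Z => hatMap S F (z : X × F)) = (fun z => DZ ((u : Z →L[ℝ] Z) z)) := by
        funext z; exact hcomp z
      rw [this]
      exact hDb.comp hubij
    -- identify the kernel of hat S with K
    have hinj : ∀ w ∈ Z, (hatMap S F : (X × F) →ₗ[ℝ] Y) w = 0 → w = 0 := by
      intro w hw h0
      have := hSZbij.1 (a₁ := ⟨w, hw⟩) (a₂ := 0) (by simpa using h0)
      simpa using congrArg Subtype.val this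
    have hsurj : ∀ y : Y, ∃ w ∈ Z, (hatMap S F : (X × F) →ₗ[ℝ] Y) w = y := by
      intro y
      obtain ⟨z, hz⟩ := hSZbij.2 y
      exact ⟨(z : X × F), z.2, hz⟩
    obtain ⟨e⟩ := ker_equiv_of_isCompl ((hatMap S F : (X × F) →ₗ[ℝ] Y)) Z K hZK hinj hsurj
    haveI hkerfin : FiniteDimensional ℝ (LinearMap.ker (hatMap S F : (X × F) →ₗ[ℝ] Y)) := by
      exact LinearEquiv.finiteDimensional e.symm
    have hrank : Module.finrank ℝ (LinearMap.ker (hatMap S F : (X × F) →ₗ[ℝ] Y)) = Module.finrank ℝ K :=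
      e.finrank_eq
    have hsup : LinearMap.range (S : X →ₗ[ℝ] Y) ⊔ F = ⊤ := by
      rw [eq_top_iff]
      rintro y -
      obtain ⟨w, -, hw⟩ := hsurj y
      have hw' : S w.1 + (w.2 : Y) = y := hw
      rw [← hw']
      exact Submodule.add_mem_sup (LinearMap.mem_range_self _ _) w.2.2
    obtain ⟨h1, h2, h3⟩ := index_formula S F hsup hkerfin
    haveI := h2
    refine ⟨⟨h1, isClosed_range_of_finiteDimensional_quotient S, h2⟩, ?_⟩
    rw [← hrank]
    exact h3
  intro S hS
  have hTT : ‖T - T‖ < (1 + C)⁻¹ := by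
    simp only [sub_self, norm_zero]
    positivity
  obtain ⟨hfred, hcount⟩ := key S hS
  obtain ⟨-, hcountT⟩ := key T hTT
  refine ⟨hfred, ?_⟩
  omega

theorem isFredholm_stable_index_locally_constant
    (T : X →L[ℝ] Y) (hT : IsFredholm T) :
    ∃ ε > (0 : ℝ), ∀ S : X →L[ℝ] Y, ‖S - T‖ < ε →
      IsFredholm S ∧ fredholmIndex S = fredholmIndex T := by
  obtain ⟨hk, -, hq⟩ := hT
  obtain ⟨ε, hε, h⟩ := isFredholm_stable_index_locally_constant' T hk hq
  refine ⟨ε, hε, fun S hS => ⟨(h S hS).1, ?_⟩⟩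
  unfold fredholmIndex
  exact (h S hS).2
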